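/- If a STRIPS planning problem Q has a solution plan P, then the delete-free relaxation of Q (where all delete-effects are removed) is solved by executing the distinct actions of P in order of first occurrence, and the cost of this relaxed plan is at most the cost of P. -/

import Mathlib

structure Strips (F A : Type) where
  init : Set F
  goal : Set F
  pre : A → Set F
  add : A → Set F
  del : A → Set F
  cost : A → ℕ

def Strips.step {F A : Type} (Q : Strips F A) (s : Set F) (a : A) : Set F :=
  (s \ Q.del a) ∪ Q.add a

def Strips.run {F A : Type} (Q : Strips F A) (s : Set F) (p : List A) : Set F :=
  p.foldl Q.step s

def Strips.ValidFrom {F A : Type} (Q : Strips F A) : Set F → List A → Prop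
  | _, [] => True
  | s, a :: p => Q.pre a ⊆ s ∧ Q.ValidFrom (Q.step s a) p

def Strips.Solves {F A : Type} (Q : Strips F A) (p : List A) : Prop :=
  Q.ValidFrom Q.init p ∧ Q.goal ⊆ Q.run Q.init p

def Strips.planCost {F A : Type} (Q : Strips F A) (p : List A) : ℕ :=
  (p.map Q.cost).sum

/-- The layered make-progress rule: in the induced state sequence, no state at a
later index is a subset of a state at an earlier index. -/
def Strips.MakesProgress {F A : Type} (Q : Strips F A) (s : Set F) (p : List A) : Prop :=
  ∀ i j : ℕ, i < j → j ≤ p.length → ¬ Q.run s (p.take j) ⊆ Q.run s (p.take i)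

/-- The delete-free relaxation: all delete-effects removed. -/
def Strips.relax {F A : Type} (Q : Strips F A) : Strips F A :=
  { Q with del := fun _ => ∅ }

/-- The distinct actions of a list, in order of first occurrence. -/
def firstDedup {A : Type} [DecidableEq A] : List A → List A
  | [] => []
  | a :: l => a :: firstDedup (l.filter (· ≠ a))
termination_by l => l.length
decreasing_by
  simp only [List.length_cons]
  first
  | exact Nat.lt_succ_of_le (List.length_filter_le _ _)
  | exact Nat.lt_succ_of_le (List.length_unattach ▸ (List.length_filter_le _ _).trans List.length_attach.le)
  | (simp only [List.length_unattach]; exact Nat.lt_succ_of_le ((List.length_filter_le _ _).trans List.length_attach.le))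
  | grind [List.length_filter_le, List.length_unattach, List.length_attach]


theorem firstDedup_sublist {A : Type} [DecidableEq A] : ∀ l : List A, List.Sublist (firstDedup l) l
  | [] => by simp [firstDedup]
  | a :: l => by
    rw [firstDedup]
    exact List.cons_sublist_cons.mpr
      ((firstDedup_sublist _).trans List.filter_sublist)
termination_by l => l.length
decreasing_by
  simp only [List.length_cons]
  exact Nat.lt_succ_of_le (List.length_filter_le _ _)

theorem relax_step_eq {F A : Type} (Q : Strips F A) (t : Set F) (a : A) :
    Q.relax.step t a = t ∪ Q.add a := by
  simp [Strips.relax, Strips.step]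

theorem key {F A : Type} [DecidableEq A] (Q : Strips F A) :
    ∀ (l : List A) (s t : Set F) (p : A → Bool),
      Q.ValidFrom s l → s ⊆ t → (∀ a ∈ l, p a = false → Q.add a ⊆ t) →
      Q.relax.ValidFrom t (firstDedup (l.filter p)) ∧
      Q.run s l ⊆ Q.relax.run t (firstDedup (l.filter p)) := by
  intro l
  induction l with
  | nil =>
    intro s t p _ hst _
    constructor <;> simp [firstDedup, Strips.ValidFrom, Strips.run, hst]
  | cons a l ih =>
    intro s t p hv hst hD
    obtain ⟨hpre, hv'⟩ := hv
    by_cases hpa : p a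
    · rw [List.filter_cons_of_pos hpa, firstDedup, List.filter_filter]
      have hstep : Q.step s a ⊆ Q.relax.step t a := by
        rw [relax_step_eq]
        rintro x (hx | hx)
        · exact Or.inl (hst hx.1)
        · exact Or.inr hx
      have hD' : ∀ b ∈ l, (decide (b ≠ a) && p b) = false → Q.add b ⊆ Q.relax.step t a := by
        intro b hb hfb
        rw [relax_step_eq]
        rcases Bool.and_eq_false_iff.mp hfb with h | h
        · have : b = a := by simpa using h
          subst this
          exact Set.subset_union_right
        · exact (hD b (List.mem_cons_of_mem _ hb) h).trans Set.subset_union_left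
      obtain ⟨h1, h2⟩ := ih (Q.step s a) (Q.relax.step t a) _ hv' hstep hD'
      refine ⟨⟨fun x hx => ?_, h1⟩, h2⟩
      show x ∈ t
      exact hst (hpre hx)
    · rw [List.filter_cons_of_neg hpa]
      have hstep : Q.step s a ⊆ t := by
        rintro x (hx | hx)
        · exact hst hx.1
        · exact hD a List.mem_cons_self (by simpa using hpa) hx
      exact ih (Q.step s a) t p hv' hstep
        (fun b hb hfb => hD b (List.mem_cons_of_mem _ hb) hfb)

/-- If a STRIPS planning problem `Q` has a solution plan `P`, then the delete-free
relaxation of `Q` is solved by executing the distinct actions of `P` in order of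
first occurrence, and the cost of this relaxed plan is at most the cost of `P`. -/
theorem relax_solved_by_firstDedup {F A : Type} [DecidableEq A]
    (Q : Strips F A) (P : List A) (hP : Q.Solves P) :
    Q.relax.Solves (firstDedup P) ∧ Q.relax.planCost (firstDedup P) ≤ Q.planCost P := by
  obtain ⟨hval, hgoal⟩ := hP
  have hfilter : P.filter (fun _ => true) = P := List.filter_true P
  obtain ⟨h1, h2⟩ := key Q P Q.init Q.init (fun _ => true) hval le_rfl (by simp)
  rw [hfilter] at h1 h2
  refine ⟨⟨h1, hgoal.trans h2⟩, ?_⟩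
  have hsub : List.Sublist ((firstDedup P).map Q.cost) (P.map Q.cost) :=
    (firstDedup_sublist P).map Q.cost
  exact hsub.sum_le_sum (by simp)
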